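/- Let a rooted tree on {1,…,d} with bond dimensions r_w (r_{r₀} = 1) be given, let p be the TTNS contraction of TTNS cores {G_k}_{k=1}^d, and let p' be the TTNS contraction of the perturbed cores {G_k + ΔG_k}_{k=1}^d (with the same tree, physical dimensions and bond dimensions). Viewing each core as a 3-tensor with middle index x_k (as in the TTNS 3-tensor convention) and writing ⦀·⦀ for the maximum over the middle index of the spectral norm of the matrix slice, suppose ⦀ΔG_k⦀ ≤ δ_k · ⦀G_k⦀ for all k, where δ_k ≥ 0. Then ‖p' − p‖_∞ ≤ (∏_{k=1}^d ⦀G_k⦀) · (Σ_{k=1}^d δ_k) · exp(Σ_{k=1}^d δ_k). Moreover, if ε ∈ (0,1) and max_k δ_k ≤ ε/(3d), then ‖p' − p‖_∞ / ∏_{k=1}^d ⦀G_k⦀ ≤ ε. -/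

import Mathlib

open scoped Classical

noncomputable section

/-- A rooted tree on the vertex set `Fin d`: a root and a parent map fixing the root,
such that every vertex reaches the root under iteration of the parent map. -/
structure ParentTree (d : ℕ) where
  root : Fin d
  parent : Fin d → Fin d
  parent_root : parent root = root
  reaches_root : ∀ v : Fin d, ∃ m : ℕ, parent^[m] v = root

namespace ParentTree

variable {d : ℕ}

/-- The children of a node `k`. -/
def children (T : ParentTree d) (k : Fin d) : Set (Fin d) :=
  {w | w ≠ T.root ∧ w ≠ k ∧ T.parent w = k}

/-- The descendants of a node `w` (the "left" set `L(w)`). -/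
def desc (T : ParentTree d) (w : Fin d) : Set (Fin d) :=
  {v | v ≠ w ∧ ∃ m : ℕ, 1 ≤ m ∧ T.parent^[m] v = w}

end ParentTree

/-- The unfolding matrix `p(x_S; x_{Sᶜ})` of a `d`-dimensional tensor `p`. -/
def unfoldMatrix {d : ℕ} {n : Fin d → ℕ} (p : (∀ i, Fin (n i)) → ℝ)
    (S : Set (Fin d)) :
    Matrix ((i : S) → Fin (n i.1)) ((j : (Sᶜ : Set (Fin d))) → Fin (n j.1)) ℝ :=
  Matrix.of fun xS xSc =>
    p fun i => if h : i ∈ S then xS ⟨i, h⟩ else xSc ⟨i, h⟩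

/-- The TTNS contraction of a family of cores `G k (β, x_k, α_k)`, where `β` is the
joint index over the children bonds of `k` and `α_k` is the bond of `k` itself. -/
def ttnsContract {d : ℕ} (T : ParentTree d) (n r : Fin d → ℕ)
    (G : ∀ k : Fin d, ((w : T.children k) → Fin (r w.1)) → Fin (n k) → Fin (r k) → ℝ) :
    (∀ i, Fin (n i)) → ℝ :=
  fun x => ∑ α : (k : Fin d) → Fin (r k), ∏ k : Fin d, G k (fun w => α w.1) (x k) (α k)


/-- The spectral norm (`ℓ² → ℓ²` operator norm) of a real matrix. -/
def specNorm {m n : Type*} [Fintype m] [Fintype n] [DecidableEq n]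
    (M : Matrix m n ℝ) : ℝ :=
  ‖LinearMap.toContinuousLinearMap (Matrix.toEuclideanLin M)‖

/-- The `⦀·⦀` norm of a 3-tensor: the maximum over the middle index of the spectral
norm of the corresponding matrix slice. -/
def tnorm {r₁ X r₂ : Type*} [Fintype r₁] [Fintype X] [Fintype r₂] [DecidableEq r₂]
    (G : r₁ → X → r₂ → ℝ) : ℝ :=
  ⨆ x : X, specNorm (Matrix.of fun α β => G α x β)

namespace ParentTree

variable {d : ℕ} (T : ParentTree d)

lemma iterate_root (m : ℕ) : T.parent^[m] T.root = T.root :=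
  Function.iterate_fixed T.parent_root m

lemma eq_root_of_iterate {v : Fin d} {m : ℕ} (hm : 1 ≤ m) (h : T.parent^[m] v = v) :
    v = T.root := by
  obtain ⟨m0, h0⟩ := T.reaches_root v
  have hkm : ∀ k : ℕ, T.parent^[k * m] v = v := by
    intro k
    induction k with
    | zero => simp
    | succ k ih => rw [Nat.succ_mul, Function.iterate_add_apply, h]; exact ih
  calc v = T.parent^[m0 * m] v := (hkm m0).symm
    _ = T.parent^[m0 * m - m0] (T.parent^[m0] v) := by
        rw [← Function.iterate_add_apply]
        congr 1
        have : m0 ≤ m0 * m := Nat.le_mul_of_pos_right m0 hm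
        omega
    _ = T.root := by rw [h0, T.iterate_root]

lemma not_mem_desc_self (k : Fin d) : k ∉ T.desc k := fun h => h.1 rfl

lemma root_not_mem_desc (k : Fin d) : T.root ∉ T.desc k := by
  rintro ⟨h1, m, _, h2⟩
  rw [T.iterate_root m] at h2
  exact h1 h2

lemma child_mem_desc {k w : Fin d} (h : w ∈ T.children k) : w ∈ T.desc k :=
  ⟨h.2.1, 1, le_rfl, by simpa using h.2.2⟩

lemma desc_trans {k j v : Fin d} (hj : j ∈ T.desc k) (hv : v ∈ T.desc j) : v ∈ T.desc k := by
  obtain ⟨hvj, m, hm, hmv⟩ := hv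
  obtain ⟨hjk, m', hm', hmj⟩ := hj
  have hit : T.parent^[m' + m] v = k := by
    rw [Function.iterate_add_apply, hmv, hmj]
  refine ⟨?_, m' + m, by omega, hit⟩
  intro hvk
  subst hvk
  have hk : v = T.root := T.eq_root_of_iterate (by omega) hit
  rw [hk, T.iterate_root] at hmv
  exact hjk (hmv.symm.trans hk.symm)

lemma not_iterate_child {k w : Fin d} (hw : w ∈ T.children k) : ∀ {u : ℕ},
    T.parent^[u] k = w → False := by
  intro u h
  match u with
  | 0 => exact hw.2.1 h.symm
  | Nat.succ u =>
    have hcyc : T.parent^[u + 2] k = k := by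
      rw [show u + 2 = 1 + (u + 1) by omega, Function.iterate_add_apply, h,
        Function.iterate_one, hw.2.2]
    have hk : k = T.root := T.eq_root_of_iterate (by omega) hcyc
    subst hk
    have : w = T.root := by rw [← h, T.iterate_root]
    exact hw.1 this

lemma child_eq_of_iterate {k w w' : Fin d} (hw : w ∈ T.children k) (hw' : w' ∈ T.children k)
    {u : ℕ} (h : T.parent^[u] w = w') : w = w' := by
  match u with
  | 0 => exact h
  | Nat.succ u =>
    exfalso
    apply T.not_iterate_child hw' (u := u)
    rw [← h, Function.iterate_succ_apply, hw.2.2]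

lemma branch_unique {k w w' j : Fin d} (hw : w ∈ T.children k) (hw' : w' ∈ T.children k)
    (hj : j ∈ T.desc w) (hj' : j ∈ T.desc w') : w = w' := by
  obtain ⟨_, s, hs1, hs2⟩ := hj
  obtain ⟨_, t, ht1, ht2⟩ := hj'
  rcases le_total s t with hst | hst
  · refine T.child_eq_of_iterate hw hw' (u := t - s) ?_
    rw [← hs2, ← Function.iterate_add_apply, show t - s + s = t by omega]
    exact ht2
  · refine (T.child_eq_of_iterate hw' hw (u := s - t) ?_).symm
    rw [← ht2, ← Function.iterate_add_apply, show s - t + t = s by omega]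
    exact hs2

lemma child_not_mem_desc_child {k w w' : Fin d} (hw : w ∈ T.children k)
    (hw' : w' ∈ T.children k) (h : w' ∈ T.desc w) : False := by
  obtain ⟨hne, s, hs1, hs2⟩ := h
  exact hne (T.child_eq_of_iterate hw' hw hs2)

lemma desc_cases {k j : Fin d} (hj : j ∈ T.desc k) :
    j ∈ T.children k ∨ ∃ w, w ∈ T.children k ∧ j ∈ T.desc w := by
  obtain ⟨hjk, m, hm1, hm2⟩ := hj
  have hex : ∃ u, T.parent^[u] j = k := ⟨m, hm2⟩
  have hspec : T.parent^[Nat.find hex] j = k := Nat.find_spec hex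
  have hm₀pos : 1 ≤ Nat.find hex := by
    rcases Nat.eq_zero_or_pos (Nat.find hex) with h | h
    · exfalso; apply hjk; rw [h] at hspec; simpa using hspec
    · exact h
  set m₀ := Nat.find hex with hm₀def
  have hpw : T.parent (T.parent^[m₀ - 1] j) = k := by
    rw [← Function.iterate_succ_apply' T.parent (m₀ - 1) j, show (m₀ - 1).succ = m₀ by omega]
    exact hspec
  have hwk : T.parent^[m₀ - 1] j ≠ k := by
    intro hcon
    exact Nat.find_min hex (m := m₀ - 1) (by omega) hcon
  have hwroot : T.parent^[m₀ - 1] j ≠ T.root := by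
    intro hcon
    have h1 : k = T.root := by rw [← hpw, hcon, T.parent_root]
    exact hwk (hcon.trans h1.symm)
  have hwc : T.parent^[m₀ - 1] j ∈ T.children k := ⟨hwroot, hwk, hpw⟩
  by_cases h1 : m₀ = 1
  · left
    have : T.parent^[m₀ - 1] j = j := by rw [h1]; simp
    exact this ▸ hwc
  · right
    refine ⟨T.parent^[m₀ - 1] j, hwc, ?_, m₀ - 1, by omega, rfl⟩
    intro hcon
    have hcyc : T.parent^[m₀ - 1] j = j := hcon.symm
    have hroot : j = T.root := T.eq_root_of_iterate (by omega) hcyc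
    apply hwroot
    rw [← hcon, hroot]

lemma mem_desc_root {v : Fin d} (h : v ≠ T.root) : v ∈ T.desc T.root := by
  obtain ⟨m, hm⟩ := T.reaches_root v
  refine ⟨h, m, ?_, hm⟩
  rcases Nat.eq_zero_or_pos m with h0 | h0
  · exfalso; apply h; rw [h0] at hm; simpa using hm
  · exact h0

lemma branch_exists {k j : Fin d} (hj : j ∈ T.desc k) (hnc : j ∉ T.children k) :
    ∃ w, w ∈ T.children k ∧ j ∈ T.desc w := (T.desc_cases hj).resolve_left hnc

end ParentTree

section SpecNorm

open scoped Matrix.Norms.L2Operator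
open Matrix

variable {m n : Type*} [Fintype m] [Fintype n] [DecidableEq n]

lemma specNorm_eq_l2 (M : Matrix m n ℝ) : specNorm M = ‖M‖ := rfl

lemma specNorm_nonneg (M : Matrix m n ℝ) : 0 ≤ specNorm M := by
  rw [specNorm_eq_l2]; exact norm_nonneg M

lemma specNorm_add_le (A B : Matrix m n ℝ) : specNorm (A + B) ≤ specNorm A + specNorm B := by
  simp only [specNorm_eq_l2]; exact norm_add_le A B

lemma specNorm_transpose [DecidableEq m] (M : Matrix m n ℝ) : specNorm Mᵀ = specNorm M := by
  simp only [specNorm_eq_l2]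
  rw [← Matrix.conjTranspose_eq_transpose_of_trivial]
  exact Matrix.l2_opNorm_conjTranspose M

def toE {ι : Type*} [Fintype ι] (v : ι → ℝ) : EuclideanSpace ℝ ι := WithLp.toLp 2 v

lemma specNorm_mulVec_le (M : Matrix m n ℝ) (v : n → ℝ) :
    ‖toE (M *ᵥ v)‖ ≤ specNorm M * ‖toE v‖ :=
  Matrix.l2_opNorm_mulVec M (toE v)

end SpecNorm

section TnormLemmas

variable {r₁ X r₂ : Type*} [Fintype r₁] [Fintype X] [Fintype r₂] [DecidableEq r₂]

lemma tnorm_nonneg (G : r₁ → X → r₂ → ℝ) : 0 ≤ tnorm G :=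
  Real.iSup_nonneg fun x => specNorm_nonneg _

lemma specNorm_le_tnorm (G : r₁ → X → r₂ → ℝ) (x : X) :
    specNorm (Matrix.of fun α β => G α x β) ≤ tnorm G :=
  le_ciSup (f := fun x : X => specNorm (Matrix.of fun α β => G α x β))
    (Set.Finite.bddAbove (Set.finite_range _)) x

lemma tnorm_add_le [Nonempty X] (G G' : r₁ → X → r₂ → ℝ) :
    tnorm (G + G') ≤ tnorm G + tnorm G' := by
  apply ciSup_le
  intro x
  have h : (Matrix.of fun α β => (G + G') α x β) =
      (Matrix.of fun α β => G α x β) + (Matrix.of fun α β => G' α x β) := rfl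
  rw [h]
  exact le_trans (specNorm_add_le _ _)
    (add_le_add (specNorm_le_tnorm G x) (specNorm_le_tnorm G' x))

end TnormLemmas

section EuclidLemmas

lemma sqrt_prod' {ι : Type*} (s : Finset ι) (f : ι → ℝ) (h : ∀ i ∈ s, 0 ≤ f i) :
    Real.sqrt (∏ i ∈ s, f i) = ∏ i ∈ s, Real.sqrt (f i) := by
  induction s using Finset.induction with
  | empty => simp
  | @insert a s ha ih =>
    rw [Finset.prod_insert ha, Finset.prod_insert ha,
      Real.sqrt_mul (h a (Finset.mem_insert_self a s)),
      ih fun i hi => h i (Finset.mem_insert_of_mem hi)]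

lemma coord_abs_le_norm {ι : Type*} [Fintype ι] (v : ι → ℝ) (i : ι) : |v i| ≤ ‖toE v‖ := by
  rw [EuclideanSpace.norm_eq, ← Real.sqrt_sq_eq_abs]
  apply Real.sqrt_le_sqrt
  have := Finset.single_le_sum (f := fun j => ‖v j‖ ^ 2) (fun j _ => by positivity)
    (Finset.mem_univ i)
  simpa [Real.norm_eq_abs, sq_abs, toE] using this

lemma norm_toE_prod {ι : Type*} [Fintype ι] [DecidableEq ι] {κ : ι → Type*} [∀ i, Fintype (κ i)]
    (v : ∀ i, κ i → ℝ) :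
    ‖toE (fun β : ∀ i, κ i => ∏ i, v i (β i))‖ = ∏ i, ‖toE (v i)‖ := by
  simp only [EuclideanSpace.norm_eq, Real.norm_eq_abs, sq_abs]
  rw [← sqrt_prod' _ _ (fun i _ => Finset.sum_nonneg fun y _ => sq_nonneg _)]
  congr 1
  rw [Finset.prod_univ_sum]
  rw [Fintype.piFinset_univ]
  apply Finset.sum_congr rfl
  intro β _
  simp only [toE, WithLp.ofLp_toLp]
  exact (Finset.prod_pow _ _ _).symm

end EuclidLemmas

section Score

variable {d : ℕ} (T : ParentTree d) (n r : Fin d → ℕ)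

lemma ParentTree.sigma_ext {k : Fin d} :
    ∀ (a b : ↥(T.children k)) (u : ↥(T.desc a.1)) (v : ↥(T.desc b.1)),
      a.1 = b.1 → u.1 = v.1 →
      (⟨a, u⟩ : Σ w : ↥(T.children k), ↥(T.desc w.1)) = ⟨b, v⟩ := by
  rintro ⟨a1, pa⟩ ⟨b1, pb⟩ ⟨u1, pu⟩ ⟨v1, pv⟩ h1 h2
  cases h1
  cases h2
  rfl

/-- Splitting the descendants of `k` into the children of `k` and their descendants. -/
def ParentTree.descEquiv (k : Fin d) :
    ↥(T.desc k) ≃ (↥(T.children k) ⊕ (Σ w : ↥(T.children k), ↥(T.desc w.1))) where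
  toFun j :=
    if h : j.1 ∈ T.children k then Sum.inl ⟨j.1, h⟩
    else Sum.inr ⟨⟨Classical.choose (T.branch_exists j.2 h),
      (Classical.choose_spec (T.branch_exists j.2 h)).1⟩,
      ⟨j.1, (Classical.choose_spec (T.branch_exists j.2 h)).2⟩⟩
  invFun s :=
    match s with
    | .inl w => ⟨w.1, T.child_mem_desc w.2⟩
    | .inr σ => ⟨σ.2.1, T.desc_trans (T.child_mem_desc σ.1.2) σ.2.2⟩
  left_inv j := by
    dsimp only
    by_cases h : j.1 ∈ T.children k
    · rw [dif_pos h]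
    · rw [dif_neg h]
  right_inv s := by
    rcases s with w | ⟨w, j⟩
    · dsimp only
      rw [dif_pos w.2]
    · dsimp only
      have hnc : j.1 ∉ T.children k := fun hc => (T.child_not_mem_desc_child w.2 hc j.2).elim
      rw [dif_neg hnc]
      congr 1
      have hb : Classical.choose (T.branch_exists (T.desc_trans (T.child_mem_desc w.2) j.2) hnc)
          = w.1 :=
        T.branch_unique
          (Classical.choose_spec (T.branch_exists (T.desc_trans (T.child_mem_desc w.2) j.2) hnc)).1
          w.2
          (Classical.choose_spec (T.branch_exists (T.desc_trans (T.child_mem_desc w.2) j.2) hnc)).2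
          j.2
      exact ParentTree.sigma_ext T _ _ _ _ hb rfl

def ParentTree.descPiEquiv (k : Fin d) :
    ((j : ↥(T.desc k)) → Fin (r j.1)) ≃
      (((w : ↥(T.children k)) → Fin (r w.1)) ×
        ((w : ↥(T.children k)) → (j : ↥(T.desc w.1)) → Fin (r j.1))) :=
  (Equiv.piCongrLeft' (fun j : ↥(T.desc k) => Fin (r j.1)) (T.descEquiv k)).trans
    ((Equiv.sumPiEquivProdPi _).trans
      (Equiv.prodCongr (Equiv.refl _)
        (Equiv.piCurry fun (w : ↥(T.children k)) (j : ↥(T.desc w.1)) =>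
          Fin (r (((T.descEquiv k).symm (Sum.inr ⟨w, j⟩)).1)))))

lemma ParentTree.descPiEquiv_fst (k : Fin d) (α : (j : ↥(T.desc k)) → Fin (r j.1))
    (w : ↥(T.children k)) :
    ((T.descPiEquiv r k) α).1 w = α ⟨w.1, T.child_mem_desc w.2⟩ := rfl

lemma ParentTree.descPiEquiv_snd (k : Fin d) (α : (j : ↥(T.desc k)) → Fin (r j.1))
    (w : ↥(T.children k)) (j : ↥(T.desc w.1)) :
    ((T.descPiEquiv r k) α).2 w j
      = α ⟨j.1, T.desc_trans (T.child_mem_desc w.2) j.2⟩ := rfl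

end Score

section ScoreDef

variable {d : ℕ} (T : ParentTree d) (n r : Fin d → ℕ)
  (H : ∀ k : Fin d, ((w : T.children k) → Fin (r w.1)) → Fin (n k) → Fin (r k) → ℝ)
  (x : ∀ i, Fin (n i))

/-- The partial contraction over the subtree rooted at `k`. -/
def Score (k : Fin d) (a : Fin (r k)) : ℝ :=
  ∑ α : (j : ↥(T.desc k)) → Fin (r j.1),
    (∏ j : ↥(T.desc k),
      H j.1 (fun w => α ⟨w.1, T.desc_trans j.2 (T.child_mem_desc w.2)⟩) (x j.1) (α j)) *
      H k (fun w => α ⟨w.1, T.child_mem_desc w.2⟩) (x k) a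

lemma Score_rec (k : Fin d) (a : Fin (r k)) :
    Score T n r H x k a =
      ∑ β : (w : ↥(T.children k)) → Fin (r w.1),
        H k β (x k) a * ∏ w : ↥(T.children k), Score T n r H x w.1 (β w) := by
  rw [Score]
  refine (Fintype.sum_equiv (T.descPiEquiv r k)
    (fun α => (∏ j : ↥(T.desc k),
      H j.1 (fun w => α ⟨w.1, T.desc_trans j.2 (T.child_mem_desc w.2)⟩) (x j.1) (α j)) *
      H k (fun w => α ⟨w.1, T.child_mem_desc w.2⟩) (x k) a)
    (fun p => (∏ w : ↥(T.children k),
        ((∏ j : ↥(T.desc w.1),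
          H j.1 (fun w' => p.2 w ⟨w'.1, T.desc_trans j.2 (T.child_mem_desc w'.2)⟩) (x j.1)
            (p.2 w j)) *
         H w.1 (fun w' => p.2 w ⟨w'.1, T.child_mem_desc w'.2⟩) (x w.1) (p.1 w))) *
      H k p.1 (x k) a) ?_).trans ?_
  · -- pointwise equality under the equivalence
    intro α
    congr 1
    · -- product over descendants splits
      refine (Fintype.prod_equiv (T.descEquiv k)
        (fun j => H j.1 (fun w => α ⟨w.1, T.desc_trans j.2 (T.child_mem_desc w.2)⟩) (x j.1) (α j))
        (fun s => match s with
          | Sum.inl w => H w.1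
              (fun w' => α ⟨w'.1, T.desc_trans (T.child_mem_desc w.2) (T.child_mem_desc w'.2)⟩)
              (x w.1) (α ⟨w.1, T.child_mem_desc w.2⟩)
          | Sum.inr σ => H σ.2.1
              (fun w' => α ⟨w'.1, T.desc_trans (T.child_mem_desc σ.1.2)
                (T.desc_trans σ.2.2 (T.child_mem_desc w'.2))⟩)
              (x σ.2.1) (α ⟨σ.2.1, T.desc_trans (T.child_mem_desc σ.1.2) σ.2.2⟩)) ?_).trans ?_
      · intro j
        by_cases h : j.1 ∈ T.children k
        · have he : T.descEquiv k j = Sum.inl ⟨j.1, h⟩ := dif_pos h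
          rw [he]
        · have he : T.descEquiv k j = Sum.inr
              ⟨⟨Classical.choose (T.branch_exists j.2 h),
                (Classical.choose_spec (T.branch_exists j.2 h)).1⟩,
               ⟨j.1, (Classical.choose_spec (T.branch_exists j.2 h)).2⟩⟩ := dif_neg h
          rw [he]
      · -- product over a sum type, then over a sigma type
        rw [Fintype.prod_sum_type, ← Finset.univ_sigma_univ, Finset.prod_sigma,
          ← Finset.prod_mul_distrib]
        apply Finset.prod_congr rfl
        intro w _
        dsimp only
        rw [mul_comm]
        rfl
  · -- Fubini over the product and the pi type
    rw [Fintype.sum_prod_type]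
    apply Finset.sum_congr rfl
    intro β _
    dsimp only
    rw [← Finset.sum_mul, mul_comm]
    congr 1
    simp only [Score]
    rw [Fintype.prod_sum]

end ScoreDef

section Root

variable {d : ℕ} (T : ParentTree d) (n r : Fin d → ℕ)
  (H : ∀ k : Fin d, ((w : T.children k) → Fin (r w.1)) → Fin (n k) → Fin (r k) → ℝ)
  (x : ∀ i, Fin (n i))

def rootEquiv : (∀ k : Fin d, Fin (r k)) ≃
    (Fin (r T.root) × ((j : ↥(T.desc T.root)) → Fin (r j.1))) where
  toFun α := (α T.root, fun j => α j.1)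
  invFun p k :=
    if h : k ∈ T.desc T.root then p.2 ⟨k, h⟩
    else Fin.cast (congrArg r (by
      by_contra hc
      exact h (T.mem_desc_root fun hk => hc hk.symm))) p.1
  left_inv α := by
    funext k
    dsimp only
    by_cases h : k ∈ T.desc T.root
    · rw [dif_pos h]
    · rw [dif_neg h]
      have hk : k = T.root := by
        by_contra hc
        exact h (T.mem_desc_root hc)
      subst hk
      exact Fin.ext rfl
  right_inv p := by
    refine Prod.ext ?_ ?_
    · dsimp only
      rw [dif_neg (T.not_mem_desc_self T.root)]
      exact Fin.ext rfl
    · funext j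
      dsimp only
      rw [dif_pos j.2]

lemma prod_split_root (F : Fin d → ℝ) :
    ∏ k : Fin d, F k = (∏ j : ↥(T.desc T.root), F j.1) * F T.root := by
  have h1 : Finset.univ.erase T.root = (T.desc T.root).toFinset := by
    ext v
    simp only [Finset.mem_erase, Finset.mem_univ, and_true, Set.mem_toFinset]
    exact ⟨fun h => T.mem_desc_root h, fun h => h.1⟩
  rw [← Finset.mul_prod_erase Finset.univ F (Finset.mem_univ T.root), h1, mul_comm]
  congr 1
  rw [Finset.prod_subtype ((T.desc T.root).toFinset) (fun v => Set.mem_toFinset) F]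

lemma contract_eq_sum_Score :
    ttnsContract T n r H x = ∑ a : Fin (r T.root), Score T n r H x T.root a := by
  rw [ttnsContract]
  refine (Fintype.sum_equiv (rootEquiv T r)
    (fun α => ∏ k : Fin d, H k (fun w => α w.1) (x k) (α k))
    (fun p => (∏ j : ↥(T.desc T.root),
        H j.1 (fun w => p.2 ⟨w.1, T.desc_trans j.2 (T.child_mem_desc w.2)⟩) (x j.1) (p.2 j)) *
      H T.root (fun w => p.2 ⟨w.1, T.child_mem_desc w.2⟩) (x T.root) p.1) ?_).trans ?_
  · intro α
    exact prod_split_root T (fun k => H k (fun w => α w.1) (x k) (α k))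
  · rw [Fintype.sum_prod_type]
    rfl

end Root

section Bound

open Matrix

variable {d : ℕ} (T : ParentTree d) (n r : Fin d → ℕ)
  (H : ∀ k : Fin d, ((w : T.children k) → Fin (r w.1)) → Fin (n k) → Fin (r k) → ℝ)
  (x : ∀ i, Fin (n i))

lemma prod_desc_split (k : Fin d) (c : Fin d → ℝ) :
    ∏ j ∈ insert k (T.desc k).toFinset, c j =
      c k * ∏ w : ↥(T.children k), ∏ j ∈ insert w.1 (T.desc w.1).toFinset, c j := by
  rw [Finset.prod_insert (by simp only [Set.mem_toFinset]; exact T.not_mem_desc_self k)]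
  congr 1
  have hbi : (T.desc k).toFinset =
      (T.children k).toFinset.biUnion (fun w => insert w (T.desc w).toFinset) := by
    ext j
    simp only [Set.mem_toFinset, Finset.mem_biUnion, Finset.mem_insert]
    constructor
    · intro hj
      rcases T.desc_cases hj with h | ⟨w, hw, hd⟩
      · exact ⟨j, by simpa [Set.mem_toFinset] using h, Or.inl rfl⟩
      · exact ⟨w, by simpa [Set.mem_toFinset] using hw,
          Or.inr (by simpa [Set.mem_toFinset] using hd)⟩
    · rintro ⟨w, hw, (rfl | hd)⟩
      · exact T.child_mem_desc (by simpa [Set.mem_toFinset] using hw)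
      · exact T.desc_trans
          (T.child_mem_desc (by simpa [Set.mem_toFinset] using hw))
          (by simpa [Set.mem_toFinset] using hd)
  have hdisj : ((T.children k).toFinset : Set (Fin d)).PairwiseDisjoint
      (fun w => insert w (T.desc w).toFinset) := by
    intro w hw w' hw' hne
    rw [Finset.mem_coe, Set.mem_toFinset] at hw hw'
    apply Finset.disjoint_left.2
    intro j hj hj'
    simp only [Finset.mem_insert, Set.mem_toFinset] at hj hj'
    rcases hj with rfl | hj
    · rcases hj' with rfl | hj'
      · exact hne rfl
      · exact T.child_not_mem_desc_child hw' hw hj'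
    · rcases hj' with rfl | hj'
      · exact T.child_not_mem_desc_child hw hw' hj
      · exact hne (T.branch_unique hw hw' hj hj')
  rw [hbi, Finset.prod_biUnion hdisj,
    Finset.prod_subtype ((T.children k).toFinset) (fun v => Set.mem_toFinset)
      (fun w => ∏ j ∈ insert w (T.desc w).toFinset, c j)]

lemma Score_bound (c : Fin d → ℝ) (hc : ∀ k, 0 ≤ c k)
    (hHc : ∀ k, specNorm (Matrix.of fun β a => H k β (x k) a) ≤ c k) :
    ∀ N k, (T.desc k).toFinset.card < N →
      ‖toE (Score T n r H x k)‖ ≤ ∏ j ∈ insert k (T.desc k).toFinset, c j := by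
  intro N
  induction N with
  | zero => intro k hk; omega
  | succ N ih =>
    intro k hk
    have hSW : Score T n r H x k =
        (Matrix.of fun β a => H k β (x k) a)ᵀ *ᵥ
          (fun β => ∏ w : ↥(T.children k), Score T n r H x w.1 (β w)) := by
      funext a
      rw [Score_rec]
      simp [Matrix.mulVec, dotProduct]
    have hcard : ∀ w : ↥(T.children k), (T.desc w.1).toFinset.card < N := by
      intro w
      have hsub : T.desc w.1 ⊆ T.desc k :=
        fun v hv => T.desc_trans (T.child_mem_desc w.2) hv
      have hss : T.desc w.1 ⊂ T.desc k :=
        (Set.ssubset_iff_of_subset hsub).2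
          ⟨w.1, T.child_mem_desc w.2, T.not_mem_desc_self w.1⟩
      have := Finset.card_lt_card ((Set.toFinset_ssubset_toFinset).2 hss)
      omega
    calc ‖toE (Score T n r H x k)‖
        ≤ specNorm ((Matrix.of fun β a => H k β (x k) a)ᵀ) *
            ‖toE (fun β : (w : ↥(T.children k)) → Fin (r w.1) =>
              ∏ w : ↥(T.children k), Score T n r H x w.1 (β w))‖ := by
          rw [hSW]; exact specNorm_mulVec_le _ _
      _ = specNorm (Matrix.of fun β a => H k β (x k) a) *
            ∏ w : ↥(T.children k), ‖toE (Score T n r H x w.1)‖ := by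
          rw [specNorm_transpose]
          congr 1
          exact norm_toE_prod (fun (w : ↥(T.children k)) => Score T n r H x w.1)
      _ ≤ c k * ∏ w : ↥(T.children k), ∏ j ∈ insert w.1 (T.desc w.1).toFinset, c j := by
          apply mul_le_mul (hHc k)
          · exact Finset.prod_le_prod (fun w _ => norm_nonneg _)
              (fun w _ => ih w.1 (hcard w))
          · exact Finset.prod_nonneg fun w _ => norm_nonneg _
          · exact hc k
      _ = ∏ j ∈ insert k (T.desc k).toFinset, c j := (prod_desc_split T k c).symm

lemma contract_abs_le (hroot : r T.root = 1) :
    |ttnsContract T n r H x| ≤ ∏ k : Fin d, tnorm (H k) := by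
  rw [contract_eq_sum_Score]
  have hb : ‖toE (Score T n r H x T.root)‖ ≤
      ∏ j ∈ insert T.root (T.desc T.root).toFinset, tnorm (H j) :=
    Score_bound T n r H x (fun k => tnorm (H k)) (fun k => tnorm_nonneg _)
      (fun k => specNorm_le_tnorm (H k) (x k))
      ((T.desc T.root).toFinset.card + 1) T.root (Nat.lt_succ_self _)
  have huniv : insert T.root (T.desc T.root).toFinset = (Finset.univ : Finset (Fin d)) := by
    ext v
    simp only [Finset.mem_insert, Set.mem_toFinset, Finset.mem_univ, iff_true]
    by_cases hv : v = T.root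
    · exact Or.inl hv
    · exact Or.inr (T.mem_desc_root hv)
  calc |∑ a : Fin (r T.root), Score T n r H x T.root a|
      ≤ ∑ a : Fin (r T.root), |Score T n r H x T.root a| :=
        Finset.abs_sum_le_sum_abs _ _
    _ ≤ ∑ _a : Fin (r T.root), ‖toE (Score T n r H x T.root)‖ :=
        Finset.sum_le_sum (fun a _ => coord_abs_le_norm _ a)
    _ = (r T.root : ℕ) • ‖toE (Score T n r H x T.root)‖ := by
        rw [Finset.sum_const, Finset.card_univ, Fintype.card_fin]
    _ = ‖toE (Score T n r H x T.root)‖ := by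
        generalize ‖toE (Score T n r H x T.root)‖ = q
        rw [hroot, one_smul]
    _ ≤ ∏ j ∈ insert T.root (T.desc T.root).toFinset, tnorm (H j) := hb
    _ = ∏ k : Fin d, tnorm (H k) := by rw [huniv]

end Bound

set_option maxHeartbeats 1000000

/-- perturbation bound for TTNS contractions. If `⦀ΔG_k⦀ ≤ δ_k ⦀G_k⦀`
for all `k`, then `‖p' − p‖_∞ ≤ (∏_k ⦀G_k⦀)(Σ_k δ_k) exp(Σ_k δ_k)`; moreover if
`ε ∈ (0,1)` and `max_k δ_k ≤ ε/(3d)` then `‖p' − p‖_∞ / ∏_k ⦀G_k⦀ ≤ ε`. -/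
theorem ttns_contraction_perturbation {d : ℕ} (T : ParentTree d) (n r : Fin d → ℕ)
    (hn : ∀ k, 1 ≤ n k) (hr : ∀ w, 1 ≤ r w) (hroot : r T.root = 1)
    (G ΔG : ∀ k : Fin d, ((w : T.children k) → Fin (r w.1)) → Fin (n k) → Fin (r k) → ℝ)
    (δ : Fin d → ℝ) (hδ : ∀ k, 0 ≤ δ k)
    (hΔG : ∀ k, tnorm (ΔG k) ≤ δ k * tnorm (G k)) :
    (∀ x : ∀ i, Fin (n i),
        |ttnsContract T n r (fun k => G k + ΔG k) x - ttnsContract T n r G x| ≤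
          (∏ k : Fin d, tnorm (G k)) * (∑ k : Fin d, δ k) * Real.exp (∑ k : Fin d, δ k)) ∧
    (∀ ε : ℝ, 0 < ε → ε < 1 → (∀ k, δ k ≤ ε / (3 * d)) →
      ∀ x : ∀ i, Fin (n i),
        |ttnsContract T n r (fun k => G k + ΔG k) x - ttnsContract T n r G x| ≤
          ε * ∏ k : Fin d, tnorm (G k)) := by
  have htnn : ∀ k, (0:ℝ) ≤ tnorm (G k) := fun k => tnorm_nonneg _
  have hprodnn : (0:ℝ) ≤ ∏ k : Fin d, tnorm (G k) :=
    Finset.prod_nonneg fun k _ => htnn k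
  have hsumnn : (0:ℝ) ≤ ∑ k : Fin d, δ k := Finset.sum_nonneg fun k _ => hδ k
  have main : ∀ x : ∀ i, Fin (n i),
      |ttnsContract T n r (fun k => G k + ΔG k) x - ttnsContract T n r G x| ≤
        (∏ k : Fin d, tnorm (G k)) * (∑ k : Fin d, δ k) * Real.exp (∑ k : Fin d, δ k) := by
    intro x
    set Hfam : ℕ → ∀ k : Fin d, ((w : T.children k) → Fin (r w.1)) → Fin (n k) → Fin (r k) → ℝ :=
      fun i k => if k.1 < i then G k + ΔG k else G k with hHfam
    set δ' : ℕ → ℝ := fun i => if h : i < d then δ ⟨i, h⟩ else 0 with hδ'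
    have hd0 : Hfam 0 = G := by funext k; simp [hHfam]
    have hdd : Hfam d = fun k => G k + ΔG k := by
      funext k; simp [hHfam, k.2]
    have tele : ttnsContract T n r (fun k => G k + ΔG k) x - ttnsContract T n r G x
        = ∑ i ∈ Finset.range d,
            (ttnsContract T n r (Hfam (i + 1)) x - ttnsContract T n r (Hfam i) x) := by
      rw [Finset.sum_range_sub (fun i => ttnsContract T n r (Hfam i) x)]
      rw [hd0, hdd]
    have hinc : ∀ i ∈ Finset.range d,
        |ttnsContract T n r (Hfam (i + 1)) x - ttnsContract T n r (Hfam i) x| ≤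
          δ' i * ((∏ k : Fin d, tnorm (G k)) * Real.exp (∑ k : Fin d, δ k)) := by
      intro i hi
      rw [Finset.mem_range] at hi
      set i0 : Fin d := ⟨i, hi⟩ with hi0
      set K : ∀ k : Fin d, ((w : T.children k) → Fin (r w.1)) → Fin (n k) → Fin (r k) → ℝ :=
        fun k => if k.1 = i then ΔG k else Hfam i k with hK
      have hne_val : ∀ k : Fin d, k ≠ i0 → k.1 ≠ i := by
        intro k hk hkv
        exact hk (Fin.ext hkv)
      have hdiff : ttnsContract T n r (Hfam (i + 1)) x - ttnsContract T n r (Hfam i) x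
          = ttnsContract T n r K x := by
        rw [ttnsContract, ttnsContract, ttnsContract, ← Finset.sum_sub_distrib]
        apply Finset.sum_congr rfl
        intro α _
        rw [← Finset.mul_prod_erase Finset.univ
            (fun k => Hfam (i+1) k (fun w => α w.1) (x k) (α k)) (Finset.mem_univ i0),
          ← Finset.mul_prod_erase Finset.univ
            (fun k => Hfam i k (fun w => α w.1) (x k) (α k)) (Finset.mem_univ i0),
          ← Finset.mul_prod_erase Finset.univ
            (fun k => K k (fun w => α w.1) (x k) (α k)) (Finset.mem_univ i0)]
        have hQ : ∏ k ∈ Finset.univ.erase i0, Hfam (i+1) k (fun w => α w.1) (x k) (α k)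
            = ∏ k ∈ Finset.univ.erase i0, Hfam i k (fun w => α w.1) (x k) (α k) := by
          apply Finset.prod_congr rfl
          intro k hk
          have hkv : k.1 ≠ i := hne_val k (Finset.mem_erase.1 hk).1
          by_cases hlt : k.1 < i
          · simp only [hHfam, if_pos hlt, if_pos (by omega : k.1 < i + 1)]
          · simp only [hHfam, if_neg hlt, if_neg (by omega : ¬ k.1 < i + 1)]
        have hKQ : ∏ k ∈ Finset.univ.erase i0, K k (fun w => α w.1) (x k) (α k)
            = ∏ k ∈ Finset.univ.erase i0, Hfam i k (fun w => α w.1) (x k) (α k) := by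
          apply Finset.prod_congr rfl
          intro k hk
          have hkv : k.1 ≠ i := hne_val k (Finset.mem_erase.1 hk).1
          simp only [hK, if_neg hkv]
        rw [hQ, hKQ]
        have h1 : Hfam (i+1) i0 = G i0 + ΔG i0 := by
          simp only [hHfam]; rw [if_pos]; exact Nat.lt_succ_self i
        have h2 : Hfam i i0 = G i0 := by
          simp only [hHfam]; rw [if_neg]; exact lt_irrefl i
        have h3 : K i0 = ΔG i0 := by simp [hK, hi0]
        rw [h1, h2, h3]
        simp only [Pi.add_apply]
        ring
      rw [hdiff]
      have hbound := contract_abs_le T n r K x hroot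
      have hKfactor : ∀ k : Fin d, k ≠ i0 → tnorm (K k) ≤ (1 + δ k) * tnorm (G k) := by
        intro k hk
        haveI : Nonempty (Fin (n k)) := ⟨⟨0, hn k⟩⟩
        have hkv : k.1 ≠ i := hne_val k hk
        simp only [hK, if_neg hkv, hHfam]
        by_cases hlt : k.1 < i
        · rw [if_pos hlt]
          calc tnorm (G k + ΔG k) ≤ tnorm (G k) + tnorm (ΔG k) := tnorm_add_le _ _
            _ ≤ tnorm (G k) + δ k * tnorm (G k) := by linarith [hΔG k]
            _ = (1 + δ k) * tnorm (G k) := by ring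
        · rw [if_neg hlt]
          have := hδ k
          nlinarith [htnn k]
      have hKi0 : tnorm (K i0) ≤ δ i0 * tnorm (G i0) := by
        have hKe : K i0 = ΔG i0 := by simp [hK, hi0]
        rw [hKe]
        exact hΔG i0
      have hprodK : ∏ k : Fin d, tnorm (K k) ≤
          δ i0 * ((∏ k : Fin d, tnorm (G k)) * Real.exp (∑ k : Fin d, δ k)) := by
        rw [← Finset.mul_prod_erase Finset.univ (fun k => tnorm (K k)) (Finset.mem_univ i0)]
        have hB : ∏ k ∈ Finset.univ.erase i0, tnorm (K k) ≤
            ∏ k ∈ Finset.univ.erase i0, (1 + δ k) * tnorm (G k) :=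
          Finset.prod_le_prod (fun k _ => tnorm_nonneg _)
            (fun k hk => hKfactor k (Finset.mem_erase.1 hk).1)
        have hBnn : (0:ℝ) ≤ ∏ k ∈ Finset.univ.erase i0, tnorm (K k) :=
          Finset.prod_nonneg fun k _ => tnorm_nonneg _
        have step1 : tnorm (K i0) * ∏ k ∈ Finset.univ.erase i0, tnorm (K k) ≤
            (δ i0 * tnorm (G i0)) * ∏ k ∈ Finset.univ.erase i0, (1 + δ k) * tnorm (G k) :=
          mul_le_mul hKi0 hB hBnn (mul_nonneg (hδ i0) (htnn i0))
        refine step1.trans ?_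
        rw [Finset.prod_mul_distrib]
        have hone : ∏ k ∈ Finset.univ.erase i0, (1 + δ k) ≤ Real.exp (∑ k : Fin d, δ k) := by
          have herasenn : (0:ℝ) ≤ ∏ k ∈ Finset.univ.erase i0, (1 + δ k) :=
            Finset.prod_nonneg fun k _ => by linarith [hδ k]
          calc ∏ k ∈ Finset.univ.erase i0, (1 + δ k)
              ≤ ∏ k : Fin d, (1 + δ k) := by
                rw [← Finset.mul_prod_erase Finset.univ (fun k => 1 + δ k)
                  (Finset.mem_univ i0)]
                exact le_mul_of_one_le_left herasenn (by linarith [hδ i0])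
            _ ≤ ∏ k : Fin d, Real.exp (δ k) :=
                Finset.prod_le_prod (fun k _ => by linarith [hδ k])
                  (fun k _ => by linarith [Real.add_one_le_exp (δ k)])
            _ = Real.exp (∑ k : Fin d, δ k) := (Real.exp_sum _ _).symm
        have hTfull : tnorm (G i0) * ∏ k ∈ Finset.univ.erase i0, tnorm (G k)
            = ∏ k : Fin d, tnorm (G k) :=
          Finset.mul_prod_erase Finset.univ (fun k => tnorm (G k)) (Finset.mem_univ i0)
        have hternn : (0:ℝ) ≤ ∏ k ∈ Finset.univ.erase i0, tnorm (G k) :=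
          Finset.prod_nonneg fun k _ => htnn k
        calc (δ i0 * tnorm (G i0)) *
              ((∏ k ∈ Finset.univ.erase i0, (1 + δ k)) * ∏ k ∈ Finset.univ.erase i0, tnorm (G k))
            = δ i0 * ((∏ k ∈ Finset.univ.erase i0, (1 + δ k)) *
                (tnorm (G i0) * ∏ k ∈ Finset.univ.erase i0, tnorm (G k))) := by ring
          _ = δ i0 * ((∏ k ∈ Finset.univ.erase i0, (1 + δ k)) * ∏ k : Fin d, tnorm (G k)) := by
              rw [hTfull]
          _ ≤ δ i0 * (Real.exp (∑ k : Fin d, δ k) * ∏ k : Fin d, tnorm (G k)) := by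
              apply mul_le_mul_of_nonneg_left _ (hδ i0)
              exact mul_le_mul_of_nonneg_right hone hprodnn
          _ = δ i0 * ((∏ k : Fin d, tnorm (G k)) * Real.exp (∑ k : Fin d, δ k)) := by ring
      have hδ'i : δ' i = δ i0 := by simp only [hδ', dif_pos hi, hi0]
      rw [hδ'i]
      exact hbound.trans hprodK
    have hsumδ' : ∑ i ∈ Finset.range d, δ' i = ∑ k : Fin d, δ k := by
      rw [← Fin.sum_univ_eq_sum_range δ' d]
      apply Finset.sum_congr rfl
      intro k _
      simp only [hδ', dif_pos k.2]
    calc |ttnsContract T n r (fun k => G k + ΔG k) x - ttnsContract T n r G x|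
        = |∑ i ∈ Finset.range d,
            (ttnsContract T n r (Hfam (i + 1)) x - ttnsContract T n r (Hfam i) x)| := by
          rw [tele]
      _ ≤ ∑ i ∈ Finset.range d,
            |ttnsContract T n r (Hfam (i + 1)) x - ttnsContract T n r (Hfam i) x| :=
          Finset.abs_sum_le_sum_abs _ _
      _ ≤ ∑ i ∈ Finset.range d,
            δ' i * ((∏ k : Fin d, tnorm (G k)) * Real.exp (∑ k : Fin d, δ k)) :=
          Finset.sum_le_sum hinc
      _ = (∑ i ∈ Finset.range d, δ' i) *
            ((∏ k : Fin d, tnorm (G k)) * Real.exp (∑ k : Fin d, δ k)) := by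
          rw [← Finset.sum_mul]
      _ = (∏ k : Fin d, tnorm (G k)) * (∑ k : Fin d, δ k) * Real.exp (∑ k : Fin d, δ k) := by
          rw [hsumδ']; ring
  refine ⟨main, ?_⟩
  intro ε hε0 hε1 hδε x
  have h3 : ∑ k : Fin d, δ k ≤ ε / 3 := by
    rcases Nat.eq_zero_or_pos d with hd | hd
    · subst hd
      simp only [Finset.univ_eq_empty, Finset.sum_empty]
      positivity
    · calc ∑ k : Fin d, δ k ≤ ∑ _k : Fin d, ε / (3 * d) :=
            Finset.sum_le_sum fun k _ => hδε k
        _ = (d : ℝ) * (ε / (3 * d)) := by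
            rw [Finset.sum_const, Finset.card_univ, Fintype.card_fin, nsmul_eq_mul]
        _ = ε / 3 := by
            have hd' : (d : ℝ) ≠ 0 := Nat.cast_ne_zero.2 (by omega)
            field_simp
  have hexp : Real.exp (∑ k : Fin d, δ k) ≤ 3 := by
    have h1 : ∑ k : Fin d, δ k ≤ 1 := by linarith
    have h2 : Real.exp (∑ k : Fin d, δ k) ≤ Real.exp 1 := Real.exp_le_exp.2 h1
    have := Real.exp_one_lt_d9
    linarith
  have hme : (∑ k : Fin d, δ k) * Real.exp (∑ k : Fin d, δ k) ≤ ε := by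
    calc (∑ k : Fin d, δ k) * Real.exp (∑ k : Fin d, δ k) ≤ (ε / 3) * 3 :=
          mul_le_mul h3 hexp (le_of_lt (Real.exp_pos _)) (by linarith)
      _ = ε := by ring
  calc |ttnsContract T n r (fun k => G k + ΔG k) x - ttnsContract T n r G x|
      ≤ (∏ k : Fin d, tnorm (G k)) * (∑ k : Fin d, δ k) * Real.exp (∑ k : Fin d, δ k) := main x
    _ = (∏ k : Fin d, tnorm (G k)) * ((∑ k : Fin d, δ k) * Real.exp (∑ k : Fin d, δ k)) := by
        ring
    _ ≤ (∏ k : Fin d, tnorm (G k)) * ε := mul_le_mul_of_nonneg_left hme hprodnn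
    _ = ε * ∏ k : Fin d, tnorm (G k) := mul_comm _ _
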